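/- arXiv:1101.4715 — 5 statements merged into one kernel-verified Lean document; each statement's English description precedes it below -/
import Mathlib

section
/- Let p be a prime number and let A be a subset of Z_p \ {0} with |A| = ℓ. Then |Σ°(A)| ≥ min(p, 2ℓ − 1 + ε(ℓ)), where ε(0) = 2, ε(1) = 1, and ε(ℓ) = 0 for ℓ ≥ 2. -/
open Finset

/-- The set of all nonempty subset sums of a finite set `A`. -/
def nss {G : Type*} [AddCommGroup G] [DecidableEq G] (A : Finset G) : Finset G :=
  (A.powerset.erase ∅).image fun B => B.sum id

namespace SubsetSumsAux



section S0
variable {G : Type*} [AddCommGroup G] [DecidableEq G]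

def S0 (A : Finset G) : Finset G := A.powerset.image fun B => B.sum id

lemma insert_zero_nss (A : Finset G) : insert (0:G) (nss A) = S0 A := by
  unfold nss S0
  rw [← Finset.insert_erase (Finset.empty_mem_powerset A), Finset.image_insert]
  simp

lemma mem_S0 {A : Finset G} {x : G} : x ∈ S0 A ↔ ∃ B ⊆ A, B.sum id = x := by
  simp [S0, Finset.mem_powerset]

lemma zero_mem_S0 (A : Finset G) : (0:G) ∈ S0 A := mem_S0.2 ⟨∅, by simp, by simp⟩

lemma mem_S0_of_mem {A : Finset G} {x : G} (h : x ∈ A) : x ∈ S0 A :=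
  mem_S0.2 ⟨{x}, by simpa, by simp⟩

lemma pair_sum_mem_S0 {A : Finset G} {x y : G} (hx : x ∈ A) (hy : y ∈ A) (hxy : x ≠ y) :
    x + y ∈ S0 A :=
  mem_S0.2 ⟨{x, y}, by simp [Finset.insert_subset_iff, hx, hy], by rw [Finset.sum_pair hxy]; rfl⟩

lemma S0_insert {A : Finset G} {a : G} (ha : a ∉ A) :
    S0 (insert a A) = S0 A ∪ (S0 A).image (· + a) := by
  unfold S0
  rw [Finset.powerset_insert, Finset.image_union, Finset.image_image]
  congr 1
  rw [Finset.image_image]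
  apply Finset.image_congr
  intro B hB
  simp only [Finset.mem_coe, Finset.mem_powerset] at hB
  have haB : a ∉ B := fun h => ha (hB h)
  simp [Function.comp, Finset.sum_insert haB, add_comm]

lemma S0_mono {A B : Finset G} (h : A ⊆ B) : S0 A ⊆ S0 B := by
  intro x hx
  obtain ⟨C, hC, rfl⟩ := mem_S0.1 hx
  exact mem_S0.2 ⟨C, hC.trans h, rfl⟩

end S0


variable {p : ℕ} [Fact p.Prime]


lemma natCast_inj_lt {i j : ℕ} (hi : i < p) (hj : j < p) (h : (i : ZMod p) = j) : i = j := by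
  have := congrArg ZMod.val h
  rwa [ZMod.val_cast_of_lt hi, ZMod.val_cast_of_lt hj] at this

def apset (T a : ZMod p) (n : ℕ) : Finset (ZMod p) :=
  (range n).image (fun j : ℕ => T - (j : ZMod p) * a)

lemma mem_apset {T a z : ZMod p} {n : ℕ} :
    z ∈ apset T a n ↔ ∃ j, j < n ∧ z = T - (j : ZMod p) * a := by
  simp [apset, eq_comm]

lemma apset_injOn {T a : ZMod p} (ha : a ≠ 0) {n : ℕ} (hn : n ≤ p) :
    Set.InjOn (fun j : ℕ => T - (j : ZMod p) * a) (range n) := by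
  intro i hi j hj h
  simp only [Finset.coe_range, Set.mem_Iio] at hi hj
  have h2 : (i : ZMod p) * a = (j : ZMod p) * a := by
    have h3 := sub_right_injective h
    simpa using h3
  exact natCast_inj_lt (lt_of_lt_of_le hi hn) (lt_of_lt_of_le hj hn)
    (mul_right_cancel₀ ha h2)

lemma card_apset {T a : ZMod p} (ha : a ≠ 0) {n : ℕ} (hn : n ≤ p) :
    (apset T a n).card = n := by
  rw [apset, Finset.card_image_of_injOn (apset_injOn ha hn), Finset.card_range]

lemma periodic_univ {Y : Finset (ZMod p)} {a x : ZMod p} (ha : a ≠ 0) (hx : x ∈ Y)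
    (hcl : ∀ y ∈ Y, y + a ∈ Y) : Y = univ := by
  have hk : ∀ k : ℕ, x + (k : ZMod p) * a ∈ Y := by
    intro k
    induction k with
    | zero => simpa using hx
    | succ k ih =>
      have := hcl _ ih
      have e : x + ((k+1 : ℕ) : ZMod p) * a = x + (k : ZMod p) * a + a := by push_cast; ring
      rwa [e]
  apply Finset.eq_univ_of_forall
  intro z
  have e : z = x + (((z - x) * a⁻¹).val : ZMod p) * a := by
    rw [ZMod.natCast_rightInverse]
    field_simp
    ring
  rw [e]; exact hk _




lemma lemW {Y : Finset (ZMod p)} {a T : ZMod p} (ha : a ≠ 0) (hT : T ∈ Y)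
    (htop : T + a ∉ Y) (huniq : ∀ y ∈ Y, y + a ∉ Y → y = T) :
    Y = apset T a Y.card := by
  have key : ∀ k : ℕ, ∀ w ∈ Y, ((T - w) * a⁻¹).val = k →
      ∀ j : ℕ, j ≤ k → T - (j : ZMod p) * a ∈ Y := by
    intro k
    induction k with
    | zero =>
      intro w hw hval j hj
      interval_cases j
      simpa using hT
    | succ k ih =>
      intro w hw hval j hj
      have hwT : w ≠ T := by
        rintro rfl
        simp [ZMod.val_eq_zero] at hval
      have hwa : w + a ∈ Y := by
        by_contra hcon
        exact hwT (huniq w hw hcon)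
      have hcast : (T - w) * a⁻¹ = ((k+1 : ℕ) : ZMod p) := by
        conv_lhs => rw [← ZMod.natCast_rightInverse ((T - w) * a⁻¹)]
        rw [hval]
      have hklt : k < p := by
        have := ZMod.val_lt ((T - w) * a⁻¹)
        omega
      have hval2 : ((T - (w + a)) * a⁻¹).val = k := by
        have e : (T - (w + a)) * a⁻¹ = (T - w) * a⁻¹ - 1 := by field_simp; ring
        rw [e, hcast]
        have : ((k+1 : ℕ) : ZMod p) - 1 = ((k : ℕ) : ZMod p) := by push_cast; ring
        rw [this, ZMod.val_cast_of_lt hklt]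
      rcases Nat.lt_or_ge j (k+1) with hj' | hj'
      · exact ih (w + a) hwa hval2 j (by omega)
      · have hjk : j = k + 1 := by omega
        subst hjk
        have hTw : T - w = ((k+1 : ℕ) : ZMod p) * a := by
          have := congrArg (· * a) hcast
          simpa [mul_assoc, inv_mul_cancel₀ ha] using this
        have : T - ((k+1 : ℕ) : ZMod p) * a = w := by rw [← hTw]; ring
        rwa [this]
  obtain ⟨w₀, hw₀, hmax⟩ := Y.exists_max_image (fun w => ((T - w) * a⁻¹).val) ⟨T, hT⟩
  set K := ((T - w₀) * a⁻¹).val with hK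
  have sub1 : apset T a (K + 1) ⊆ Y := by
    intro z hz
    obtain ⟨j, hj, rfl⟩ := mem_apset.1 hz
    exact key K w₀ hw₀ rfl j (by omega)
  have sub2 : Y ⊆ apset T a (K + 1) := by
    intro w hw
    have e : w = T - ((((T - w) * a⁻¹).val : ℕ) : ZMod p) * a := by
      rw [ZMod.natCast_rightInverse]
      field_simp
      ring
    rw [e]
    exact mem_apset.2 ⟨_, by have := hmax w hw; omega, rfl⟩
  have heq : Y = apset T a (K + 1) := Finset.Subset.antisymm sub2 sub1
  have hcard : Y.card = K + 1 := by
    rw [heq, card_apset ha (by have := ZMod.val_lt ((T - w₀) * a⁻¹); omega)]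
  rw [hcard, ← heq]




lemma exists_cast_lt {n : ℕ} (hn : n ≤ p) (ξ : ZMod p) :
    (∃ i, i < n ∧ (i : ZMod p) = ξ) ↔ ξ.val < n := by
  constructor
  · rintro ⟨i, hi, rfl⟩
    rwa [ZMod.val_cast_of_lt (lt_of_lt_of_le hi hn)]
  · intro h
    exact ⟨ξ.val, h, ZMod.natCast_rightInverse ξ⟩

/-- counting: the number of j < n with (j + (p-k)) % p < n -/
lemma count_filter (n k : ℕ) (hk1 : 1 ≤ k) (hkp : k ≤ p - 1) (hn : n ≤ p - 2) (hn3 : 3 ≤ n)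
    (hcount : ((range n).filter (fun j => (j + (p - k)) % p < n)).card = n - 1) :
    k = 1 ∨ k = p - 1 := by
  have hp5 : 5 ≤ p := by omega
  have hsplit : (range n).filter (fun j => (j + (p - k)) % p < n) =
      (Ico k n) ∪ (range (min k (n + k - p))) := by
    ext j
    simp only [mem_filter, mem_range, mem_union, mem_Ico, lt_min_iff]
    by_cases hjn : j < n
    · rcases Nat.lt_or_ge j k with hjk | hjk
      · have e1 : j + (p - k) < p := by omega
        have e2 : (j + (p - k)) % p = j + (p - k) := Nat.mod_eq_of_lt e1
        rw [e2]
        omega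
      · have e1 : j + (p - k) = (j - k) + p := by omega
        have e2 : (j + (p - k)) % p = j - k := by
          rw [e1, Nat.add_mod_right, Nat.mod_eq_of_lt (by omega)]
        rw [e2]
        omega
    · constructor
      · rintro ⟨h, -⟩; omega
      · rintro (⟨-, h⟩ | ⟨h, h2⟩) <;> omega
  have hdisj : Disjoint (Ico k n) (range (min k (n + k - p))) := by
    rw [Finset.disjoint_left]
    intro j hj hj2
    simp only [mem_Ico] at hj
    simp only [mem_range, lt_min_iff] at hj2
    omega
  rw [hsplit, Finset.card_union_of_disjoint hdisj, Nat.card_Ico, Finset.card_range] at hcount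
  omega

lemma apset_top_notin {S b : ZMod p} {n : ℕ} (hb : b ≠ 0) (hn : n ≤ p - 1) :
    S + b ∉ apset S b n := by
  intro h
  obtain ⟨i, hi, he⟩ := mem_apset.1 h
  have : ((i + 1 : ℕ) : ZMod p) * b = 0 := by
    push_cast
    have : S + b - (S - (i : ZMod p) * b) = 0 := by rw [← he]; ring
    linear_combination this
  have h2 : ((i + 1 : ℕ) : ZMod p) = 0 := by
    rcases mul_eq_zero.1 this with h | h
    · exact h
    · exact absurd h hb
  rw [ZMod.natCast_eq_zero_iff] at h2
  have := Nat.le_of_dvd (by omega) h2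
  omega


lemma count_via_rep {Y : Finset (ZMod p)} {T a : ZMod p} {n : ℕ} (ha : a ≠ 0) (hn : n ≤ p)
    (h : Y = apset T a n) (P : ZMod p → Prop) [DecidablePred P] :
    (Y.filter P).card = ((range n).filter (fun j : ℕ => P (T - (j : ZMod p) * a))).card := by
  rw [h]
  unfold apset
  rw [Finset.filter_image, Finset.card_image_of_injOn
    ((apset_injOn ha hn).mono (Finset.filter_subset _ _))]

lemma lemU {X : Finset (ZMod p)} {a b T S : ZMod p} {n : ℕ} (hn3 : 3 ≤ n) (hn : n + 2 ≤ p)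
    (ha : a ≠ 0) (hb : b ≠ 0) (h1 : X = apset T a n) (h2 : X = apset S b n) :
    b = a ∨ b = -a := by
  have hplarge : 5 ≤ p := by omega
  have hnp : n ≤ p := by omega
  -- count C via rep 2
  have count2 : (X.filter (fun z => z + b ∈ X)).card = n - 1 := by
    rw [count_via_rep hb hnp h2]
    have heq : (range n).filter (fun j : ℕ => (S - (j : ZMod p) * b) + b ∈ X) = Ico 1 n := by
      ext j
      simp only [mem_filter, mem_range, mem_Ico]
      constructor
      · rintro ⟨hj, hmem⟩
        refine ⟨?_, hj⟩
        by_contra h0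
        have hj0 : j = 0 := by omega
        subst hj0
        simp only [Nat.cast_zero, zero_mul, sub_zero] at hmem
        exact apset_top_notin hb (by omega) (h2 ▸ hmem)
      · rintro ⟨h1j, hj⟩
        refine ⟨hj, ?_⟩
        have e : (S - (j : ZMod p) * b) + b = S - (((j - 1 : ℕ)) : ZMod p) * b := by
          have e1 : ((j - 1 : ℕ) : ZMod p) = (j : ZMod p) - 1 := by
            push_cast [Nat.cast_sub h1j]
            ring
          rw [e1]
          ring
        rw [e, h2]
        exact mem_apset.2 ⟨j - 1, by omega, rfl⟩
    rw [heq, Nat.card_Ico]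
  -- count C via rep 1
  set c : ZMod p := b * a⁻¹ with hc
  have hc0 : c ≠ 0 := mul_ne_zero hb (inv_ne_zero ha)
  have hba : c * a = b := by rw [hc]; field_simp
  set k : ℕ := c.val with hk
  have hk1 : 1 ≤ k := by
    have : c.val ≠ 0 := fun h => hc0 ((ZMod.val_eq_zero c).1 h)
    omega
  have hkp : k ≤ p - 1 := by have := ZMod.val_lt c; omega
  have count1 : (X.filter (fun z => z + b ∈ X)).card =
      ((range n).filter (fun j => (j + (p - k)) % p < n)).card := by
    rw [count_via_rep ha hnp h1]
    congr 1
    apply Finset.filter_congr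
    intro j hj
    simp only [mem_range] at hj
    have key : ((T - (j : ZMod p) * a) + b ∈ X) ↔
        ∃ i, i < n ∧ (i : ZMod p) = (j : ZMod p) - c := by
      rw [h1]
      constructor
      · intro h
        obtain ⟨i, hi, he⟩ := mem_apset.1 h
        refine ⟨i, hi, ?_⟩
        apply mul_right_cancel₀ ha
        rw [sub_mul, hba]
        linear_combination he
      · rintro ⟨i, hi, he⟩
        refine mem_apset.2 ⟨i, hi, ?_⟩
        rw [he, sub_mul, hba]
        ring
    rw [key]
    have e3 : (j : ZMod p) - c = ((j + (p - k) : ℕ) : ZMod p) := by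
      have hck : c = ((k : ℕ) : ZMod p) := (ZMod.natCast_rightInverse c).symm
      rw [hck]
      push_cast [Nat.cast_sub (show k ≤ p by omega), ZMod.natCast_self]
      ring
    rw [exists_cast_lt hnp, e3, ZMod.val_natCast]
  have hcc := count1.symm.trans count2
  rcases count_filter n k hk1 hkp (by omega) hn3 hcc with h | h
  · left
    have hc1 : c = 1 := by
      have : c = ((k : ℕ) : ZMod p) := (ZMod.natCast_rightInverse c).symm
      rw [this, h, Nat.cast_one]
    rw [← hba, hc1, one_mul]
  · right
    have hc1 : c = -1 := by
      have e : c = ((k : ℕ) : ZMod p) := (ZMod.natCast_rightInverse c).symm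
      rw [e, h]
      push_cast [Nat.cast_sub (show 1 ≤ p by omega), ZMod.natCast_self]
      ring
    rw [← hba, hc1]
    ring




lemma lemB {A : Finset (ZMod p)} (h0 : (0 : ZMod p) ∉ A) (hcard : p + 1 ≤ 2 * A.card) :
    S0 A = univ := by
  have hple : A.card ≤ p - 1 := by
    have : A ⊆ univ.erase 0 := fun x hx => mem_erase.2 ⟨fun h => h0 (h ▸ hx), mem_univ x⟩
    have := Finset.card_le_card this
    rwa [Finset.card_erase_of_mem (mem_univ 0), Finset.card_univ, ZMod.card] at this
  have hp3 : 3 ≤ p := by omega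
  have htwo : (2 : ZMod p) ≠ 0 := by
    have : ¬ (p ∣ 2) := fun h => by have := Nat.le_of_dvd (by norm_num) h; omega
    intro h
    have h2 : ((2 : ℕ) : ZMod p) = 0 := by push_cast; exact h
    exact this ((ZMod.natCast_eq_zero_iff 2 p).1 h2)
  apply Finset.eq_univ_of_forall
  intro t
  by_cases ht0 : t = 0
  · exact ht0 ▸ zero_mem_S0 A
  by_contra htS
  have htA : t ∉ A := fun h => htS (mem_S0_of_mem h)
  have hkey : ∀ a ∈ A, t - a ∈ A → t - a = a := by
    intro a ha hta
    by_contra hne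
    have : a + (t - a) ∈ S0 A := pair_sum_mem_S0 ha hta (Ne.symm hne)
    simp only [add_sub_cancel] at this
    exact htS this
  -- intersection of A and (t - A) has at most 1 element
  have hinter : (A ∩ A.image (fun a => t - a)).card ≤ 1 := by
    apply Finset.card_le_one.2
    intro x hx y hy
    simp only [mem_inter, mem_image] at hx hy
    obtain ⟨hxA, a, ha, hax⟩ := hx
    obtain ⟨hyA, b, hb, hby⟩ := hy
    have hx2 : t - x ∈ A := by rw [← hax] at *; simpa [sub_sub_cancel] using ha
    have hy2 : t - y ∈ A := by rw [← hby] at *; simpa [sub_sub_cancel] using hb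
    have ex : t - x = x := hkey x hxA hx2
    have ey : t - y = y := hkey y hyA hy2
    have : (2 : ZMod p) * x = 2 * y := by
      have e1 : x + x = t := by linear_combination -ex
      have e2 : y + y = t := by linear_combination -ey
      linear_combination e1 - e2
    exact mul_left_cancel₀ htwo this
  have himg : (A.image (fun a => t - a)).card = A.card :=
    Finset.card_image_of_injective _ (fun x y h => by
      have : x = y := by linear_combination -h
      exact this)
  have huni : (A ∪ A.image (fun a => t - a)).card = p := by
    have h1 := Finset.card_union_add_card_inter A (A.image (fun a => t - a))
    have h2 : (A ∪ A.image (fun a => t - a)).card ≤ p := by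
      have := Finset.card_le_card (Finset.subset_univ (A ∪ A.image (fun a => t - a)))
      rwa [Finset.card_univ, ZMod.card] at this
    omega
  have : (A ∪ A.image (fun a => t - a)) = univ :=
    Finset.eq_univ_of_card _ (by rw [huni, ZMod.card])
  have h0mem : (0 : ZMod p) ∈ A ∪ A.image (fun a => t - a) := this ▸ mem_univ 0
  rcases mem_union.1 h0mem with h | h
  · exact h0 h
  · simp only [mem_image] at h
    obtain ⟨a, ha, hza⟩ := h
    have : a = t := by linear_combination -hza
    exact htA (this ▸ ha)




lemma apset_succ (T a : ZMod p) {m : ℕ} (hm : 1 ≤ m) :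
    apset T a m ∪ (apset T a m).image (· + a) = apset (T + a) a (m + 1) := by
  ext z
  simp only [mem_union, mem_image, mem_apset]
  constructor
  · rintro (⟨j, hj, rfl⟩ | ⟨w, ⟨j, hj, rfl⟩, rfl⟩)
    · exact ⟨j + 1, by omega, by push_cast; ring⟩
    · exact ⟨j, by omega, by ring⟩
  · rintro ⟨j, hj, rfl⟩
    rcases j with _ | i
    · right
      exact ⟨T, ⟨0, by omega, by simp⟩, by simp⟩
    · left
      exact ⟨i, by omega, by push_cast; ring⟩


lemma three_le_S0_card {A : Finset (ZMod p)} (h0 : (0 : ZMod p) ∉ A) (h2 : 2 ≤ A.card) :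
    3 ≤ (S0 A).card := by
  obtain ⟨a, ha⟩ := Finset.card_pos.1 (by omega : 0 < A.card)
  obtain ⟨b, hb⟩ := Finset.card_pos.1 (show 0 < (A.erase a).card by
    rw [Finset.card_erase_of_mem ha]; omega)
  have hbA : b ∈ A := Finset.mem_of_mem_erase hb
  have hab : b ≠ a := Finset.ne_of_mem_erase hb
  have ha0 : a ≠ 0 := fun h => h0 (h ▸ ha)
  have hb0 : b ≠ 0 := fun h => h0 (h ▸ hbA)
  have hsub : ({0, a, b} : Finset (ZMod p)) ⊆ S0 A := by
    intro z hz
    simp only [Finset.mem_insert, Finset.mem_singleton] at hz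
    rcases hz with rfl | rfl | rfl
    · exact zero_mem_S0 A
    · exact mem_S0_of_mem ha
    · exact mem_S0_of_mem hbA
  have hcard3 : ({0, a, b} : Finset (ZMod p)).card = 3 := by
    rw [Finset.card_insert_of_notMem (by simp [Ne.symm ha0, Ne.symm hb0]),
      Finset.card_insert_of_notMem (by simp [Ne.symm hab]), Finset.card_singleton]
  have := Finset.card_le_card hsub
  omega

theorem main : ∀ m : ℕ, 2 ≤ m → ∀ A : Finset (ZMod p), (0 : ZMod p) ∉ A → A.card = m →
    min p (2 * m - 1) ≤ (S0 A).card := by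
  intro m hm
  induction m, hm using Nat.le_induction with
  | base =>
    intro A h0 hcard
    have := three_le_S0_card h0 (by omega)
    have : min p (2 * 2 - 1) ≤ 3 := by
      have := min_le_right p (2 * 2 - 1); omega
    omega
  | succ m hm IH =>
    intro A h0 hcard
    by_cases hple : p + 1 ≤ 2 * A.card
    · have := lemB h0 hple
      rw [this, Finset.card_univ, ZMod.card]
      exact min_le_left _ _
    · -- p ≥ 2*(m+1)
      have hp2 : 2 * m + 2 ≤ p := by omega
      rw [min_eq_right (by omega : 2 * (m + 1) - 1 ≤ p)]
      by_contra hcon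
      have hc : (S0 A).card ≤ 2 * m := by omega
      -- key: for every x ∈ A, S0 A is an AP with difference x
      have key : ∀ x ∈ A, ∃ T, S0 A = apset T x ((S0 A).card) := by
        intro x hx
        have hx0 : x ≠ 0 := fun h => h0 (h ▸ hx)
        set A' := A.erase x with hA'
        have hcA' : A'.card = m := by rw [hA', Finset.card_erase_of_mem hx]; omega
        have hIH := IH A' (fun h => h0 (Finset.mem_of_mem_erase h)) hcA'
        rw [min_eq_right (by omega : 2 * m - 1 ≤ p)] at hIH
        set n' := (S0 A').card with hn'
        have hU : S0 A = S0 A' ∪ (S0 A').image (· + x) := by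
          conv_lhs => rw [← Finset.insert_erase hx]
          exact S0_insert (Finset.notMem_erase x A)
        set E := (S0 A').image (· + x) \ S0 A' with hE
        have hsplit : S0 A = S0 A' ∪ E := by
          rw [hE, Finset.union_sdiff_self_eq_union, ← hU]
        have hdisj : Disjoint (S0 A') E := Finset.disjoint_sdiff
        have hcardsum : (S0 A).card = n' + E.card := by
          rw [hsplit, Finset.card_union_of_disjoint hdisj]
        rcases Nat.lt_or_ge E.card 2 with hE2 | hE2
        · rcases Nat.eq_zero_or_pos E.card with hE0 | hE1
          · exfalso
            have hEe : E = ∅ := Finset.card_eq_zero.1 hE0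
            have hsubs : (S0 A').image (· + x) ⊆ S0 A' := by
              rw [← Finset.sdiff_eq_empty_iff_subset] at *
              exact hEe
            have : S0 A' = univ := periodic_univ hx0 (zero_mem_S0 A')
              (fun y hy => hsubs (Finset.mem_image_of_mem _ hy))
            have : n' = p := by rw [hn', this, Finset.card_univ, ZMod.card]
            omega
          · -- E.card = 1
            have hE1' : E.card = 1 := by omega
            obtain ⟨w, hw⟩ := Finset.card_eq_one.1 hE1'
            have hwE : w ∈ E := hw ▸ Finset.mem_singleton_self w
            have hwim : w ∈ (S0 A').image (· + x) := (Finset.mem_sdiff.1 (hE ▸ hwE)).1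
            have hwnot : w ∉ S0 A' := (Finset.mem_sdiff.1 (hE ▸ hwE)).2
            obtain ⟨y, hy, hyx⟩ := Finset.mem_image.1 hwim
            have hTmem : w - x ∈ S0 A' := by
              have : y = w - x := by rw [← hyx]; ring
              exact this ▸ hy
            have htop : (w - x) + x ∉ S0 A' := by
              rw [sub_add_cancel]; exact hwnot
            have huniq : ∀ y' ∈ S0 A', y' + x ∉ S0 A' → y' = w - x := by
              intro y' hy' hy'x
              have : y' + x ∈ E := by
                rw [hE, Finset.mem_sdiff]
                exact ⟨Finset.mem_image_of_mem _ hy', hy'x⟩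
              rw [hw, Finset.mem_singleton] at this
              rw [← this]; ring
            have hrep : S0 A' = apset (w - x) x n' := lemW hx0 hTmem htop huniq
            refine ⟨w, ?_⟩
            have hn'1 : 1 ≤ n' := by omega
            have := apset_succ (w - x) (a := x) hn'1
            rw [hcardsum, hE1', hU, hrep, this, sub_add_cancel]
        · exfalso
          omega
      -- now get three distinct elements
      have h3 : 3 ≤ A.card := by omega
      obtain ⟨a, ha⟩ := Finset.card_pos.1 (by omega : 0 < A.card)
      obtain ⟨b, hb⟩ := Finset.card_pos.1 (show 0 < (A.erase a).card by
        rw [Finset.card_erase_of_mem ha]; omega)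
      obtain ⟨c, hcm⟩ := Finset.card_pos.1 (show 0 < ((A.erase a).erase b).card by
        rw [Finset.card_erase_of_mem hb, Finset.card_erase_of_mem ha]; omega)
      have hbA : b ∈ A := Finset.mem_of_mem_erase hb
      have hcA : c ∈ A := Finset.mem_of_mem_erase (Finset.mem_of_mem_erase hcm)
      have hba : b ≠ a := Finset.ne_of_mem_erase hb
      have hcb : c ≠ b := Finset.ne_of_mem_erase hcm
      have hca : c ≠ a := Finset.ne_of_mem_erase (Finset.mem_of_mem_erase hcm)
      have ha0 : a ≠ 0 := fun h => h0 (h ▸ ha)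
      have hb0 : b ≠ 0 := fun h => h0 (h ▸ hbA)
      have hc0 : c ≠ 0 := fun h => h0 (h ▸ hcA)
      obtain ⟨Ta, repa⟩ := key a ha
      obtain ⟨Tb, repb⟩ := key b hbA
      obtain ⟨Tc, repc⟩ := key c hcA
      have hn3 : 3 ≤ (S0 A).card := three_le_S0_card h0 (by omega)
      have hnp : (S0 A).card + 2 ≤ p := by omega
      have h1 := lemU hn3 hnp ha0 hb0 repa repb
      have h2 := lemU hn3 hnp ha0 hc0 repa repc
      rcases h1 with h1 | h1
      · exact hba h1
      · rcases h2 with h2 | h2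
        · exact hca h2
        · exact hcb (h2.trans h1.symm)


end SubsetSumsAux

theorem stmt12 {p : ℕ} (hp : p.Prime) (A : Finset (ZMod p)) (hA0 : (0 : ZMod p) ∉ A)
    (ℓ : ℕ) (hℓ : A.card = ℓ) :
    min p (2 * ℓ + (if ℓ = 0 then 2 else if ℓ = 1 then 1 else 0) - 1) ≤
      (insert (0 : ZMod p) (nss A)).card := by
  haveI : Fact p.Prime := ⟨hp⟩
  subst hℓ
  rw [SubsetSumsAux.insert_zero_nss]
  by_cases h0 : A.card = 0
  · rw [h0]
    have hmin : min p (2 * 0 + (if (0:ℕ) = 0 then 2 else if (0:ℕ) = 1 then 1 else 0) - 1) ≤ 1 := by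
      simp
    have h1 : 0 < (SubsetSumsAux.S0 A).card :=
      Finset.card_pos.2 ⟨0, SubsetSumsAux.zero_mem_S0 A⟩
    omega
  · by_cases h1 : A.card = 1
    · obtain ⟨a, rfl⟩ := Finset.card_eq_one.1 h1
      have ha0 : a ≠ 0 := fun h => hA0 (h ▸ Finset.mem_singleton_self a)
      have hsub : ({0, a} : Finset (ZMod p)) ⊆ SubsetSumsAux.S0 {a} := by
        intro z hz
        simp only [Finset.mem_insert, Finset.mem_singleton] at hz
        rcases hz with rfl | hz2
        · exact SubsetSumsAux.zero_mem_S0 _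
        · exact SubsetSumsAux.mem_S0_of_mem (by simp [hz2])
      have hc2 : ({0, a} : Finset (ZMod p)).card = 2 := by
        rw [Finset.card_insert_of_notMem (by simp [Ne.symm ha0]), Finset.card_singleton]
      have hle := Finset.card_le_card hsub
      rw [Finset.card_singleton]
      have hmin : min p (2 * 1 + (if (1:ℕ) = 0 then 2 else if (1:ℕ) = 1 then 1 else 0) - 1) ≤ 2 := by
        simp
      omega
    · have h2 : 2 ≤ A.card := by omega
      rw [if_neg h0, if_neg h1, add_zero]
      exact SubsetSumsAux.main A.card h2 A hA0 rfl
end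

section
/- Let p be a prime number and let T be a sequence (multiset) of elements of Z_p \ {0} of length |T| ≥ 2. Then |Σ°(T)| ≥ min(p, |T| + 1). Moreover, equality holds only if |T| ≥ p − 1, or there exists g ∈ Z_p \ {0} such that every element of T lies in {g, −g}. -/
open Finset

def msums {G : Type*} [AddCommMonoid G] (T : Multiset G) : Set G :=
  {x | ∃ S : Multiset G, S ≤ T ∧ S ≠ 0 ∧ S.sum = x}

open Pointwise

lemma msums_zero {G : Type*} [AddCommMonoid G] : msums (0 : Multiset G) = ∅ := by
  ext x
  simp only [msums, Set.mem_setOf_eq, Set.mem_empty_iff_false, iff_false]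
  rintro ⟨S, hS, hS0, -⟩
  exact hS0 (Multiset.le_zero.mp hS)

lemma msums_cons {G : Type*} [AddCommGroup G] [DecidableEq G] (a : G) (T : Multiset G) :
    insert 0 (msums (a ::ₘ T)) = ({0, a} : Set G) + insert 0 (msums T) := by
  ext x
  simp only [Set.mem_add]
  constructor
  · rintro (rfl | ⟨S, hS, hS0, rfl⟩)
    · exact ⟨0, by simp, 0, by simp, by simp⟩
    · by_cases haS : a ∈ S
      · refine ⟨a, by simp, (S.erase a).sum, ?_, ?_⟩
        · rcases eq_or_ne (S.erase a) 0 with h0 | h0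
          · simp [h0]
          · exact Set.mem_insert_iff.mpr (Or.inr ⟨S.erase a, by
              simpa using Multiset.erase_le_erase a hS, h0, rfl⟩)
        · conv_rhs => rw [← Multiset.cons_erase haS]
          simp [Multiset.sum_cons]
      · have hST : S ≤ T := by
          rw [Multiset.le_iff_count] at hS ⊢
          intro x
          rcases eq_or_ne x a with rfl | hx
          · simp [Multiset.count_eq_zero_of_notMem haS]
          · have h := hS x
            rwa [Multiset.count_cons_of_ne hx] at h
        exact ⟨0, by simp, S.sum, Or.inr ⟨S, hST, hS0, rfl⟩, by simp⟩
  · rintro ⟨y, hy, z, hz, rfl⟩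
    rcases hy with rfl | hy
    · rcases hz with rfl | ⟨S, hS, hS0, rfl⟩
      · simp
      · exact Or.inr ⟨S, le_trans hS (Multiset.le_cons_self T a), hS0, by simp⟩
    · simp only [Set.mem_singleton_iff] at hy
      subst hy
      rcases hz with rfl | ⟨S, hS, hS0, rfl⟩
      · exact Or.inr ⟨{y}, by simpa using Multiset.cons_le_cons y (Multiset.zero_le T),
          by simp, by simp⟩
      · exact Or.inr ⟨y ::ₘ S, Multiset.cons_le_cons y hS, by simp, by simp⟩

lemma key_cd {p : ℕ} (hp : p.Prime) (a : ZMod p) (ha : a ≠ 0) (T : Multiset (ZMod p)) :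
    min p ((insert (0 : ZMod p) (msums T)).ncard + 1) ≤
      (insert (0 : ZMod p) (msums (a ::ₘ T))).ncard := by
  haveI : Fact p.Prime := ⟨hp⟩
  classical
  set A : Set (ZMod p) := insert 0 (msums T) with hA
  have hfin : A.Finite := Set.toFinite _
  have hfin2 : (insert (0 : ZMod p) (msums (a ::ₘ T))).Finite := Set.toFinite _
  set s : Finset (ZMod p) := hfin.toFinset with hs
  set t : Finset (ZMod p) := hfin2.toFinset with ht
  have hts : t = ({0, a} : Finset (ZMod p)) + s := by
    apply Finset.coe_injective
    rw [Finset.coe_add, ht, Set.Finite.coe_toFinset, hs, Set.Finite.coe_toFinset,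
      msums_cons]
    simp [hA]
  have hcard2 : ({0, a} : Finset (ZMod p)).card = 2 := by
    rw [Finset.card_insert_of_notMem (by simpa using ha.symm), Finset.card_singleton]
  have hcd := ZMod.cauchy_davenport hp (s := {0, a}) (t := s)
    ⟨0, by simp⟩ ⟨0, (Set.Finite.mem_toFinset hfin).mpr (Set.mem_insert _ _)⟩
  rw [hcard2] at hcd
  rw [Set.ncard_eq_toFinset_card A hfin,
    Set.ncard_eq_toFinset_card (insert (0 : ZMod p) (msums (a ::ₘ T))) hfin2, ← hs, ← ht,
    hts]
  omega

lemma msums_singleton {p : ℕ} (a : ZMod p) :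
    insert 0 (msums ({a} : Multiset (ZMod p))) = ({0, a} : Set (ZMod p)) := by
  classical
  have : ({a} : Multiset (ZMod p)) = a ::ₘ 0 := rfl
  rw [this, msums_cons, msums_zero]
  have h0 : (insert 0 ∅ : Set (ZMod p)) = {0} := by simp
  rw [h0]
  simp [Set.add_singleton]

lemma lower {p : ℕ} (hp : p.Prime) :
    ∀ T : Multiset (ZMod p), (0 : ZMod p) ∉ T → T ≠ 0 →
      min p (Multiset.card T + 1) ≤ (insert (0 : ZMod p) (msums T)).ncard := by
  intro T
  induction T using Multiset.induction_on with
  | empty => intro _ h; exact absurd rfl h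
  | cons a T ih =>
    intro h0 _
    have ha : a ≠ 0 := fun h => h0 (h ▸ Multiset.mem_cons_self a T)
    rcases eq_or_ne T 0 with rfl | hT
    · have : (a ::ₘ 0 : Multiset (ZMod p)) = {a} := rfl
      rw [this, msums_singleton, Set.ncard_pair ha.symm]
      simp only [Multiset.card_singleton]
      have := hp.two_le
      omega
    · have ih' := ih (fun h => h0 (Multiset.mem_cons_of_mem h)) hT
      have hcd := key_cd hp a ha T
      simp only [Multiset.card_cons]
      omega

lemma pair_set {p : ℕ} (a b : ZMod p) :
    insert 0 (msums ({a, b} : Multiset (ZMod p))) = ({0, a, b, a + b} : Set (ZMod p)) := by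
  classical
  have : ({a, b} : Multiset (ZMod p)) = a ::ₘ {b} := rfl
  rw [this, msums_cons, msums_singleton]
  ext x
  simp only [Set.mem_add, Set.mem_insert_iff, Set.mem_singleton_iff]
  constructor
  · rintro ⟨y, hy, z, hz, rfl⟩
    rcases hy with rfl | rfl <;> rcases hz with rfl | rfl <;> simp
  · rintro (rfl | h | h | h)
    · exact ⟨0, Or.inl rfl, 0, Or.inl rfl, by simp⟩
    · exact ⟨a, Or.inr rfl, 0, Or.inl rfl, by rw [add_zero, h]⟩
    · exact ⟨0, Or.inl rfl, b, Or.inr rfl, by rw [zero_add, h]⟩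
    · exact ⟨a, Or.inr rfl, b, Or.inr rfl, h.symm⟩

lemma pair_ncard {p : ℕ} (a b : ZMod p) (ha : a ≠ 0) (hb : b ≠ 0) (hba : b ≠ a)
    (hba' : b ≠ -a) :
    ({0, a, b, a + b} : Set (ZMod p)).ncard = 4 := by
  have h1 : (a : ZMod p) + b ≠ 0 := fun h => hba' (by rw [eq_neg_iff_add_eq_zero, add_comm]; exact h)
  rw [Set.ncard_insert_of_notMem
      (by simp [Ne.symm ha, Ne.symm hb, Ne.symm h1]) (Set.toFinite _),
    Set.ncard_insert_of_notMem (by simp [Ne.symm hba, left_eq_add, hb]) (Set.toFinite _),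
    Set.ncard_insert_of_notMem (by simp [right_eq_add, ha]) (Set.toFinite _),
    Set.ncard_singleton]

lemma upper {p : ℕ} (hp : p.Prime) (a b : ZMod p) (ha : a ≠ 0) (hb : b ≠ 0)
    (hba : b ≠ a) (hba' : b ≠ -a) :
    ∀ R : Multiset (ZMod p), (0 : ZMod p) ∉ R → Multiset.card R + 4 ≤ p →
      Multiset.card R + 4 ≤ (insert (0 : ZMod p) (msums (a ::ₘ b ::ₘ R))).ncard := by
  intro R
  induction R using Multiset.induction_on with
  | empty =>
    intro _ _
    have : (a ::ₘ b ::ₘ 0 : Multiset (ZMod p)) = {a, b} := rfl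
    rw [this, pair_set, pair_ncard a b ha hb hba hba']
    simp
  | cons c R ih =>
    intro h0 hcard
    have hc : c ≠ 0 := fun h => h0 (h ▸ Multiset.mem_cons_self c R)
    have h0R : (0 : ZMod p) ∉ R := fun h => h0 (Multiset.mem_cons_of_mem h)
    simp only [Multiset.card_cons] at hcard ⊢
    have ihR := ih h0R (by omega)
    have hswap : (a ::ₘ b ::ₘ c ::ₘ R) = c ::ₘ a ::ₘ b ::ₘ R := by
      rw [Multiset.cons_swap b c R, Multiset.cons_swap a c (b ::ₘ R)]
    rw [hswap]
    have hcd := key_cd hp c hc (a ::ₘ b ::ₘ R)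
    omega

theorem stmt13 {p : ℕ} (hp : p.Prime) (T : Multiset (ZMod p))
    (hT0 : (0 : ZMod p) ∉ T) (hT : 2 ≤ Multiset.card T) :
    min p (Multiset.card T + 1) ≤ (insert (0 : ZMod p) (msums T)).ncard ∧
      ((insert (0 : ZMod p) (msums T)).ncard = min p (Multiset.card T + 1) →
        p - 1 ≤ Multiset.card T ∨
          ∃ g : ZMod p, g ≠ 0 ∧ ∀ x ∈ T, x = g ∨ x = -g) := by
  classical
  have hTne : T ≠ 0 := by
    intro h; rw [h] at hT; simp at hT
  refine ⟨lower hp T hT0 hTne, ?_⟩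
  intro heq
  by_contra hcon
  push_neg at hcon
  obtain ⟨hsmall, hg⟩ := hcon
  have hp2 := hp.two_le
  -- extract a ∈ T
  obtain ⟨a, haT⟩ := Multiset.exists_mem_of_ne_zero hTne
  have ha : a ≠ 0 := fun h => hT0 (h ▸ haT)
  obtain ⟨b, hbT, hb1, hb2⟩ := hg a ha
  have hb : b ≠ 0 := fun h => hT0 (h ▸ hbT)
  -- b ∈ T.erase a
  have hbTe : b ∈ T.erase a := (Multiset.mem_erase_of_ne hb1).mpr hbT
  set R : Multiset (ZMod p) := (T.erase a).erase b with hR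
  have hTeq : T = a ::ₘ b ::ₘ R := by
    rw [hR, Multiset.cons_erase hbTe, Multiset.cons_erase haT]
  have hcardR : Multiset.card R + 2 = Multiset.card T := by
    rw [hTeq]; simp
  have h0R : (0 : ZMod p) ∉ R := fun h =>
    hT0 (by rw [hTeq]; exact Multiset.mem_cons_of_mem (Multiset.mem_cons_of_mem h))
  have hup := upper hp a b ha hb hb1 hb2 R h0R (by omega)
  rw [← hTeq] at hup
  omega
end

section
/- Let G be a finite abelian group, and let A be a subset of G \ {0} of cardinality cr(G) − 1 such that Σ(A) ≠ G. If A' is a complete subset of A (i.e., a nonempty subset with Σ(A') = ⟨A'⟩), then A ∩ ⟨A'⟩ = ⟨A'⟩ \ {0}. -/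
open Finset

/-- The critical number of a finite abelian group `G`. -/
noncomputable def cr (G : Type*) [AddCommGroup G] [Fintype G] [DecidableEq G] : ℕ :=
  sInf {ℓ : ℕ | 0 < ℓ ∧ ∀ A : Finset G, (0 : G) ∉ A → ℓ ≤ A.card → nss A = Finset.univ}

lemma mem_nss {G : Type*} [AddCommGroup G] [DecidableEq G] {A : Finset G} {y : G} :
    y ∈ nss A ↔ ∃ B : Finset G, B ⊆ A ∧ B.Nonempty ∧ B.sum id = y := by
  simp only [nss, Finset.mem_image, Finset.mem_erase, Finset.mem_powerset,
    ← Finset.nonempty_iff_ne_empty]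
  constructor
  · rintro ⟨B, ⟨h1, h2⟩, h3⟩; exact ⟨B, h2, h1, h3⟩
  · rintro ⟨B, h2, h1, h3⟩; exact ⟨B, ⟨h1, h2⟩, h3⟩

lemma nss_mono {G : Type*} [AddCommGroup G] [DecidableEq G] {A B : Finset G}
    (h : A ⊆ B) : nss A ⊆ nss B := by
  intro y hy
  rw [mem_nss] at hy ⊢
  obtain ⟨C, h1, h2, h3⟩ := hy
  exact ⟨C, h1.trans h, h2, h3⟩

theorem stmt14 {G : Type*} [AddCommGroup G] [Fintype G] [DecidableEq G]
    (A A' : Finset G) (hA0 : (0 : G) ∉ A) (hcard : A.card = cr G - 1)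
    (hns : nss A ≠ Finset.univ)
    (hsub : A' ⊆ A) (hne : A'.Nonempty)
    (hcomplete : (nss A' : Set G) = (AddSubgroup.closure (A' : Set G) : Set G)) :
    (A : Set G) ∩ (AddSubgroup.closure (A' : Set G) : Set G) =
      (AddSubgroup.closure (A' : Set G) : Set G) \ {0} := by
  set H := AddSubgroup.closure (A' : Set G) with hH
  -- membership transfer
  have hmem : ∀ y : G, y ∈ nss A' ↔ y ∈ H := by
    intro y
    constructor
    · intro hy
      have : y ∈ (nss A' : Set G) := hy
      rw [hcomplete] at this; exact this
    · intro hy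
      have : y ∈ ((H : Set G)) := hy
      rw [← hcomplete] at this; exact this
  -- the key lemma: if x ∈ H then nss (insert x A) ⊆ nss A
  have key : ∀ x : G, x ∈ H → nss (insert x A) ⊆ nss A := by
    intro x hx y hy
    rw [mem_nss] at hy
    obtain ⟨B, hB1, hB2, hB3⟩ := hy
    by_cases hxB : x ∈ B
    · -- B = insert x (B.erase x)
      set C := B.erase x with hC
      have hCA : C ⊆ A := by
        intro a ha
        have h1 := Finset.mem_erase.mp ha
        have := hB1 h1.2
        rcases Finset.mem_insert.mp this with h | h
        · exact absurd h h1.1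
        · exact h
      have hsum : C.sum id + x = y := by
        rw [← hB3, hC]
        exact Finset.sum_erase_add B id hxB
      set C₁ := C.filter (· ∈ A') with hC₁
      set C₂ := C.filter (· ∉ A') with hC₂
      have hsplit : C₁.sum id + C₂.sum id = C.sum id :=
        Finset.sum_filter_add_sum_filter_not C (· ∈ A') id
      -- C₁.sum id ∈ H
      have hC1H : C₁.sum id ∈ H := by
        rcases Finset.eq_empty_or_nonempty C₁ with h | h
        · rw [h, Finset.sum_empty]; exact H.zero_mem
        · have : C₁.sum id ∈ nss A' := by
            rw [mem_nss]
            exact ⟨C₁, fun a ha => (Finset.mem_filter.mp ha).2, h, rfl⟩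
          exact (hmem _).mp this
      have hsH : C₁.sum id + x ∈ H := H.add_mem hC1H hx
      obtain ⟨B', hB'1, hB'2, hB'3⟩ := mem_nss.mp ((hmem _).mpr hsH)
      have hdisj : Disjoint C₂ B' := by
        rw [Finset.disjoint_left]
        intro a ha ha'
        exact (Finset.mem_filter.mp ha).2 (hB'1 ha')
      rw [mem_nss]
      refine ⟨C₂ ∪ B', Finset.union_subset ?_ (hB'1.trans hsub), ?_, ?_⟩
      · exact (Finset.filter_subset _ _).trans hCA
      · exact hB'2.mono Finset.subset_union_right
      · rw [Finset.sum_union hdisj, hB'3, ← hsum, ← hsplit]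
        abel
    · rw [mem_nss]
      refine ⟨B, ?_, hB2, hB3⟩
      intro a ha
      rcases Finset.mem_insert.mp (hB1 ha) with h | h
      · exact absurd (h ▸ ha) hxB
      · exact h
  -- cr G is a member of the defining set
  have hSne : {ℓ : ℕ | 0 < ℓ ∧ ∀ A : Finset G, (0 : G) ∉ A → ℓ ≤ A.card →
      nss A = Finset.univ}.Nonempty := by
    refine ⟨Fintype.card G, Fintype.card_pos, ?_⟩
    intro B hB0 hBcard
    exfalso
    have hBsub : B ⊆ Finset.univ.erase 0 := by
      intro a ha
      exact Finset.mem_erase.mpr ⟨fun h => hB0 (h ▸ ha), Finset.mem_univ a⟩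
    have h1 : B.card ≤ (Finset.univ.erase (0 : G)).card := Finset.card_le_card hBsub
    rw [Finset.card_erase_of_mem (Finset.mem_univ 0), Finset.card_univ] at h1
    have h2 : 0 < Fintype.card G := Fintype.card_pos
    omega
  have hcr := Nat.sInf_mem hSne
  obtain ⟨hcrpos, hspan⟩ := hcr
  have hcrpos' : 0 < cr G := hcrpos
  -- Now the main proof
  ext z
  simp only [Set.mem_inter_iff, Set.mem_diff, Set.mem_singleton_iff, Finset.mem_coe,
    SetLike.mem_coe]
  constructor
  · rintro ⟨hzA, hzH⟩
    exact ⟨hzH, fun h => hA0 (h ▸ hzA)⟩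
  · rintro ⟨hzH, hz0⟩
    refine ⟨?_, hzH⟩
    by_contra hzA
    have h0 : (0 : G) ∉ insert z A := by
      rw [Finset.mem_insert]
      rintro (h | h)
      · exact hz0 h.symm
      · exact hA0 h
    have hcard' : (insert z A).card = cr G := by
      rw [Finset.card_insert_of_notMem hzA, hcard]
      omega

    have huniv : nss (insert z A) = Finset.univ := hspan _ h0 (le_of_eq hcard'.symm)
    apply hns
    apply Finset.eq_univ_of_forall
    intro y
    exact key z hzH (huniv ▸ Finset.mem_univ y)
end

section
/- Let p and q be odd prime numbers with p + ⌊2√(p − 2)⌋ + 1 < q < 2p + 3, let G = Z_{pq}, and let K be the subgroup of G of order p. Let g ∈ G \ K, and let A ⊆ K ∪ (g + K) ∪ (−g + K) be a subset of G with |A| = p + q − 3 and A ∩ K = K \ {0}. Then Σ(A) ≠ G. -/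
open Finset

theorem stmt15 {p q : ℕ} (hp : p.Prime) (hq : q.Prime) (hpodd : Odd p) (hqodd : Odd q)
    (h1 : p + Nat.sqrt (4 * (p - 2)) + 1 < q) (h2 : q < 2 * p + 3)
    (K : AddSubgroup (ZMod (p * q))) (hK : Nat.card K = p)
    (g : ZMod (p * q)) (hg : g ∉ K)
    (A : Finset (ZMod (p * q)))
    (hAsub : (A : Set (ZMod (p * q))) ⊆
      (K : Set (ZMod (p * q))) ∪ (fun h => g + h) '' (K : Set (ZMod (p * q))) ∪
        (fun h => -g + h) '' (K : Set (ZMod (p * q))))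
    (hAcard : A.card = p + q - 3)
    (hAK : (A : Set (ZMod (p * q))) ∩ (K : Set (ZMod (p * q))) =
      (K : Set (ZMod (p * q))) \ {0}) :
    (nss A : Set (ZMod (p * q))) ≠ Set.univ := by
  classical
  intro hcontra
  have hp2 : 2 ≤ p := hp.two_le
  have hq3 : 3 ≤ q := by
    obtain ⟨k, hk⟩ := hqodd
    have := hq.two_le
    omega
  haveI : NeZero (p * q) := ⟨(Nat.mul_pos hp.pos hq.pos).ne'⟩
  -- the quotient map
  set π : ZMod (p * q) →+ ZMod (p * q) ⧸ K := QuotientAddGroup.mk' K with hπ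
  have hπ0 : ∀ x, π x = 0 ↔ x ∈ K := fun x => QuotientAddGroup.eq_zero_iff x
  have hg0 : π g ≠ 0 := fun h => hg ((hπ0 g).mp h)
  -- cardinality of the quotient is q
  have hcardQ : Nat.card (ZMod (p * q) ⧸ K) = q := by
    have h := AddSubgroup.card_eq_card_quotient_mul_card_addSubgroup K
    rw [Nat.card_zmod, hK] at h
    have h' : q * p = Nat.card (ZMod (p * q) ⧸ K) * p := by
      rw [Nat.mul_comm q p]; exact h
    exact (Nat.eq_of_mul_eq_mul_right hp.pos h').symm
  -- order of π g is q
  have hord : addOrderOf (π g) = q := by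
    have hdvd : addOrderOf (π g) ∣ q := by
      have h := addOrderOf_dvd_natCard (π g)
      rwa [hcardQ] at h
    rcases (Nat.Prime.eq_one_or_self_of_dvd hq _ hdvd) with h | h
    · exact absurd (AddMonoid.addOrderOf_eq_one_iff.mp h) hg0
    · exact h
  have hkey : ∀ m : ℤ, m • (π g) = 0 → (q : ℤ) ∣ m := by
    intro m hm
    have := addOrderOf_dvd_iff_zsmul_eq_zero.mpr hm
    rwa [hord] at this
  have hgneg : π g ≠ - π g := by
    intro h
    have h2 : (2 : ℤ) • π g = 0 := by
      have : π g + π g = 0 := by nth_rewrite 1 [h]; abel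
      rw [two_zsmul]; exact this
    have := hkey 2 h2
    have := Int.le_of_dvd (by norm_num) this
    omega
  -- each element of A maps to 0, π g, or -π g
  have hval : ∀ x ∈ A, π x = 0 ∨ π x = π g ∨ π x = - π g := by
    intro x hx
    rcases hAsub hx with (hx | ⟨h, hh, rfl⟩) | ⟨h, hh, rfl⟩
    · exact Or.inl ((hπ0 x).mpr hx)
    · refine Or.inr (Or.inl ?_)
      have : π h = 0 := (hπ0 h).mpr hh
      simp [map_add, this]
    · refine Or.inr (Or.inr ?_)
      have : π h = 0 := (hπ0 h).mpr hh
      simp [map_add, this]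
  -- counting
  set A0 : Finset (ZMod (p * q)) := A.filter (fun x => x ∈ K) with hA0
  set A1 : Finset (ZMod (p * q)) := A.filter (fun x => π x = π g) with hA1
  set A2 : Finset (ZMod (p * q)) := A.filter (fun x => π x = - π g) with hA2
  have hK0 : (0 : ZMod (p * q)) ∈ (K : Set (ZMod (p * q))) := K.zero_mem
  have hKfin : (K : Set (ZMod (p * q))).Finite := Set.toFinite _
  have hcardA0 : A0.card = p - 1 := by
    have hc : (↑A0 : Set (ZMod (p * q))) = (↑A : Set (ZMod (p * q))) ∩ ↑K := by
      ext x; simp [hA0]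
    have h' : (↑A0 : Set (ZMod (p * q))).ncard = ((K : Set (ZMod (p * q))) \ {0}).ncard := by
      rw [hc, hAK]
    rw [Set.ncard_coe_finset] at h'
    have hKn : (K : Set (ZMod (p * q))).ncard = p := by
      rw [← Nat.card_coe_set_eq]; exact hK
    rw [h', Set.ncard_diff_singleton_of_mem hK0, hKn]
  have hcard12 : A1.card + A2.card = q - 2 := by
    have hsplit : A0.card + (A.filter (fun x => ¬ x ∈ K)).card = A.card :=
      Finset.card_filter_add_card_filter_not _
    have hunion : A.filter (fun x => ¬ x ∈ K) = A1 ∪ A2 := by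
      ext x
      simp only [Finset.mem_filter, Finset.mem_union, hA1, hA2]
      constructor
      · rintro ⟨hx, hxK⟩
        rcases hval x hx with h | h | h
        · exact absurd ((hπ0 x).mp h) hxK
        · exact Or.inl ⟨hx, h⟩
        · exact Or.inr ⟨hx, h⟩
      · rintro (⟨hx, h⟩ | ⟨hx, h⟩)
        · exact ⟨hx, fun hxK => hg0 (by rw [← h]; exact (hπ0 x).mpr hxK)⟩
        · refine ⟨hx, fun hxK => ?_⟩
          have h0 : π x = 0 := (hπ0 x).mpr hxK
          rw [h0] at h
          exact hg0 (neg_eq_zero.mp h.symm)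
    have hdisj : Disjoint A1 A2 := by
      rw [Finset.disjoint_left]
      intro x hx1 hx2
      simp only [hA1, hA2, Finset.mem_filter] at hx1 hx2
      exact hgneg (hx1.2.symm.trans hx2.2)
    rw [hunion, Finset.card_union_of_disjoint hdisj] at hsplit
    rw [hcardA0, hAcard] at hsplit
    omega
  -- sum of π over any B ⊆ A
  have hsum : ∀ B : Finset (ZMod (p * q)), B ⊆ A →
      π (B.sum id) = ((B.filter (fun x => π x = π g)).card : ℤ) • π g
        - ((B.filter (fun x => π x = - π g)).card : ℤ) • π g := by
    intro B hB
    rw [map_sum]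
    simp only [id_eq]
    have hBsplit : ∑ x ∈ B, π x =
        ∑ x ∈ B.filter (fun x => π x = π g), π x +
        ∑ x ∈ B.filter (fun x => ¬ π x = π g), π x :=
      (Finset.sum_filter_add_sum_filter_not B _ _).symm
    have hBsplit2 : ∑ x ∈ B.filter (fun x => ¬ π x = π g), π x =
        ∑ x ∈ (B.filter (fun x => ¬ π x = π g)).filter (fun x => π x = - π g), π x +
        ∑ x ∈ (B.filter (fun x => ¬ π x = π g)).filter (fun x => ¬ π x = - π g), π x :=
      (Finset.sum_filter_add_sum_filter_not _ _ _).symm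
    have h1s : ∑ x ∈ B.filter (fun x => π x = π g), π x =
        ((B.filter (fun x => π x = π g)).card : ℤ) • π g := by
      rw [Finset.sum_congr rfl (fun x hx => (Finset.mem_filter.mp hx).2),
        Finset.sum_const, natCast_zsmul]
    have hff : (B.filter (fun x => ¬ π x = π g)).filter (fun x => π x = - π g) =
        B.filter (fun x => π x = - π g) := by
      ext x
      simp only [Finset.mem_filter, and_assoc]
      constructor
      · rintro ⟨hx, _, h⟩; exact ⟨hx, h⟩
      · rintro ⟨hx, h⟩
        exact ⟨hx, fun h' => hgneg (h'.symm.trans h), h⟩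
    have h2s : ∑ x ∈ (B.filter (fun x => ¬ π x = π g)).filter (fun x => π x = - π g), π x =
        - (((B.filter (fun x => π x = - π g)).card : ℤ) • π g) := by
      rw [hff, Finset.sum_congr rfl (fun x hx => (Finset.mem_filter.mp hx).2),
        Finset.sum_const, natCast_zsmul]
      exact neg_nsmul ..
    have h3s : ∑ x ∈ (B.filter (fun x => ¬ π x = π g)).filter (fun x => ¬ π x = - π g), π x = 0 := by
      apply Finset.sum_eq_zero
      intro x hx
      simp only [Finset.mem_filter] at hx
      rcases hval x (hB hx.1.1) with h | h | h
      · exact h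
      · exact absurd h hx.1.2
      · exact absurd h hx.2
    rw [hBsplit, hBsplit2, h1s, h2s, h3s, add_zero, ← sub_eq_add_neg]
  -- the missing element
  set a : ℕ := A1.card with ha
  set y : ZMod (p * q) := ((a : ℤ) + 1) • g with hy
  have hyin : y ∈ nss A := by
    have : y ∈ (nss A : Set (ZMod (p * q))) := by rw [hcontra]; trivial
    exact_mod_cast this
  rw [nss, Finset.mem_image] at hyin
  obtain ⟨B, hBmem, hBsum⟩ := hyin
  rw [Finset.mem_erase, Finset.mem_powerset] at hBmem
  obtain ⟨_, hBA⟩ := hBmem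
  -- compare images in the quotient
  have hπy : π y = ((a : ℤ) + 1) • π g := by rw [hy, map_zsmul]
  have heq : ((B.filter (fun x => π x = π g)).card : ℤ) • π g
      - ((B.filter (fun x => π x = - π g)).card : ℤ) • π g = ((a : ℤ) + 1) • π g := by
    rw [← hsum B hBA, hBsum, hπy]
  set i : ℕ := (B.filter (fun x => π x = π g)).card with hi
  set j : ℕ := (B.filter (fun x => π x = - π g)).card with hj
  have hile : i ≤ a := Finset.card_le_card (Finset.filter_subset_filter _ hBA)
  have hjle : j ≤ A2.card := Finset.card_le_card (Finset.filter_subset_filter _ hBA)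
  have hzero : (((i : ℤ) - j) - ((a : ℤ) + 1)) • π g = 0 := by
    rw [sub_zsmul, sub_zsmul, ← heq]
    abel
  obtain ⟨k, hk⟩ := hkey _ hzero
  have hb : (a : ℤ) + A2.card = (q : ℤ) - 2 := by
    have := hcard12
    push_cast
    omega
  have hm1 : ((i : ℤ) - j) - ((a : ℤ) + 1) ≤ -1 := by
    have : (i : ℤ) ≤ a := by exact_mod_cast hile
    omega
  have hm2 : -((q : ℤ) - 1) ≤ ((i : ℤ) - j) - ((a : ℤ) + 1) := by
    have : (j : ℤ) ≤ A2.card := by exact_mod_cast hjle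
    omega
  have habs := Int.le_of_dvd (b := -(((i : ℤ) - j) - ((a : ℤ) + 1))) (by omega)
    (dvd_neg.mpr ⟨k, hk⟩)
  omega
end

section
/- Let p and q be odd prime numbers with p < q ≤ p + ⌊2√(p − 2)⌋ + 1, let G = Z_{pq}, and let g ∈ G be an element of order pq. Let A = { ±g, ±2g, …, ±((p + q − 2)/2)·g }, so that |A| = p + q − 2. Then Σ(A) ≠ G. -/
open Finset

theorem stmt16 {p q : ℕ} (hp : p.Prime) (hq : q.Prime) (hpodd : Odd p) (hqodd : Odd q)
    (h1 : p < q) (h2 : q ≤ p + Nat.sqrt (4 * (p - 2)) + 1)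
    (g : ZMod (p * q)) (hg : addOrderOf g = p * q)
    (A : Finset (ZMod (p * q)))
    (hA : A = (Finset.Icc 1 ((p + q - 2) / 2)).image (fun i : ℕ => i • g) ∪
              (Finset.Icc 1 ((p + q - 2) / 2)).image (fun i : ℕ => -(i • g)))
    (hAcard : A.card = p + q - 2) :
    (nss A : Set (ZMod (p * q))) ≠ Set.univ := by
  haveI : NeZero (p * q) := ⟨Nat.mul_ne_zero hp.pos.ne' hq.pos.ne'⟩
  set k := (p + q - 2) / 2 with hk
  have hp3 : 3 ≤ p := by
    rcases hp.two_le.lt_or_eq with h | h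
    · omega
    · exfalso; rw [← h] at hpodd; exact (Nat.not_odd_iff_even.mpr even_two) hpodd
  have hq3 : 3 ≤ q := by omega
  have hpm : p % 2 = 1 := Nat.odd_iff.mp hpodd
  have hqm : q % 2 = 1 := Nat.odd_iff.mp hqodd
  have h2k : 2 * k + 2 = p + q := by omega
  have hkpq : k < p * q := by nlinarith
  -- key: nonzero multiples below p*q are nonzero
  have key : ∀ n : ℕ, n < p * q → n • g = 0 → n = 0 := by
    intro n hn h0
    have hd := addOrderOf_dvd_of_nsmul_eq_zero h0
    rw [hg] at hd
    exact Nat.eq_zero_of_dvd_of_lt hd hn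
  -- injectivity of i ↦ i • g on Icc 1 k
  have hinj : ∀ i ∈ Icc 1 k, ∀ j ∈ Icc 1 k, i • g = j • g → i = j := by
    have haux : ∀ i j : ℕ, i ≤ j → j ≤ k → i • g = j • g → i = j := by
      intro i j hij hjk he
      have h0 : (j - i) • g = 0 := by
        rw [sub_nsmul g hij, he]; abel
      have := key (j - i) (by omega) h0
      omega
    intro i hi j hj he
    simp only [mem_Icc] at hi hj
    rcases le_total i j with h | h
    · exact haux i j h hj.2 he
    · exact (haux j i h hi.2 he.symm).symm
  set T : ℕ := ∑ i ∈ Icc 1 k, i with hT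
  -- positive part
  have hpos : ∀ B ⊆ (Icc 1 k).image (fun i : ℕ => i • g),
      ∃ a : ℕ, a ≤ T ∧ B.sum id = a • g := by
    intro B hB
    obtain ⟨I, hI, rfl⟩ := Finset.subset_image_iff.mp hB
    refine ⟨∑ i ∈ I, i, Finset.sum_le_sum_of_subset hI, ?_⟩
    rw [Finset.sum_image (fun i hi j hj => hinj i (hI hi) j (hI hj))]
    simp only [id]
    rw [Finset.sum_smul]
  -- negative part
  have hneg : ∀ B ⊆ (Icc 1 k).image (fun i : ℕ => -(i • g)),
      ∃ b : ℕ, b ≤ T ∧ B.sum id = -(b • g) := by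
    intro B hB
    obtain ⟨I, hI, rfl⟩ := Finset.subset_image_iff.mp hB
    refine ⟨∑ i ∈ I, i, Finset.sum_le_sum_of_subset hI, ?_⟩
    rw [Finset.sum_image (fun i hi j hj hij =>
      hinj i (hI hi) j (hI hj) (neg_injective hij))]
    simp only [id]
    rw [Finset.sum_neg_distrib, Finset.sum_smul]
  -- the containment
  have hsub : nss A ⊆ (Finset.Icc (-(T : ℤ)) (T : ℤ)).image (fun t : ℤ => t • g) := by
    intro x hx
    simp only [nss, Finset.mem_image, Finset.mem_erase, Finset.mem_powerset] at hx
    obtain ⟨B, ⟨-, hBA⟩, rfl⟩ := hx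
    have hsplit := Finset.sum_inter_add_sum_sdiff B
      ((Icc 1 k).image (fun i : ℕ => i • g)) id
    obtain ⟨a, ha, hae⟩ := hpos (B ∩ (Icc 1 k).image (fun i : ℕ => i • g))
      (Finset.inter_subset_right)
    have hBN : B \ (Icc 1 k).image (fun i : ℕ => i • g) ⊆
        (Icc 1 k).image (fun i : ℕ => -(i • g)) := by
      intro y hy
      rw [Finset.mem_sdiff] at hy
      have := hBA hy.1
      rw [hA, Finset.mem_union] at this
      exact this.resolve_left hy.2
    obtain ⟨b, hb, hbe⟩ := hneg _ hBN
    refine Finset.mem_image.mpr ⟨(a : ℤ) - b, ?_, ?_⟩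
    · rw [Finset.mem_Icc]; omega
    · rw [sub_zsmul, natCast_zsmul, natCast_zsmul, ← hsplit, hae, hbe]
  -- Gauss sum
  have gauss : ∀ n : ℕ, 2 * ∑ i ∈ Icc 1 n, i = n * (n + 1) := by
    intro n
    induction n with
    | zero => simp
    | succ m ih =>
      rw [Finset.sum_Icc_succ_top (by omega : 1 ≤ m + 1), Nat.mul_add, ih]
      ring
  have h2T : 2 * T = k * (k + 1) := gauss k
  -- cardinality bound
  have hcard : (nss A).card ≤ 2 * T + 1 := by
    calc (nss A).card ≤ ((Finset.Icc (-(T : ℤ)) (T : ℤ)).image (fun t : ℤ => t • g)).card :=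
          Finset.card_le_card hsub
      _ ≤ (Finset.Icc (-(T : ℤ)) (T : ℤ)).card := Finset.card_image_le
      _ = 2 * T + 1 := by rw [Int.card_Icc]; omega
  -- arithmetic: 2T + 1 < p * q
  have hs := Nat.sqrt_le' (4 * (p - 2))
  set s := Nat.sqrt (4 * (p - 2)) with hsdef
  have hfinal : 2 * T + 1 < p * q := by
    rw [h2T]
    have hss : s * s ≤ 4 * (p - 2) := by rw [hsdef, ← pow_two]; exact Nat.sqrt_le' _
    have hs'' : (s : ℤ) * s + 8 ≤ 4 * p := by
      exact_mod_cast (by omega : s * s + 8 ≤ 4 * p)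
    have hqp1 : (0 : ℤ) ≤ (q : ℤ) - p - 1 := by omega
    have hqs : (q : ℤ) - p - 1 ≤ s := by omega
    have h3 : ((q : ℤ) - p - 1) * ((q : ℤ) - p - 1) ≤ (s : ℤ) * s :=
      mul_self_le_mul_self hqp1 hqs
    have h2k' : 2 * (k : ℤ) + 2 = p + q := by exact_mod_cast h2k
    have hkk : (2 * (k : ℤ) + 2) * (2 * (k : ℤ) + 2) = ((p : ℤ) + q) * ((p : ℤ) + q) := by
      rw [h2k']
    zify
    nlinarith [h3, h2k', hkk, hs'']
  -- conclude
  intro hcontra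
  rw [Finset.coe_eq_univ] at hcontra
  have : (nss A).card = p * q := by rw [hcontra, Finset.card_univ, ZMod.card]
  omega
end
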